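/- There exists ε > 0 such that for every optimal solution x* ⊕ y* ⊕ z* of BPD, the optimal diameter of BP equals n − e^T z*, i.e., diam(BP) = n − e^T z*. -/

import Mathlib

open Matrix Finset

def BinaryVec {n : ℕ} (x : Fin n → ℝ) : Prop := ∀ i, x i = 0 ∨ x i = 1

/-- Feasibility for BP: `Ax ≤ b`, `x ∈ {0,1}ⁿ`. -/
def FeasBP {n m : ℕ} (A : Matrix (Fin m) (Fin n) ℝ) (b : Fin m → ℝ)
    (x : Fin n → ℝ) : Prop :=
  BinaryVec x ∧ A.mulVec x ≤ b

/-- Optimality for BP with objective `cᵀ x`. -/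
def OptBP {n m : ℕ} (A : Matrix (Fin m) (Fin n) ℝ) (b : Fin m → ℝ)
    (c : Fin n → ℝ) (x : Fin n → ℝ) : Prop :=
  FeasBP A b x ∧ ∀ x', FeasBP A b x' → ∑ i, c i * x' i ≤ ∑ i, c i * x i

/-- Feasibility for BPD. -/
def FeasBPD {n m : ℕ} (A : Matrix (Fin m) (Fin n) ℝ) (b : Fin m → ℝ)
    (x y z : Fin n → ℝ) : Prop :=
  BinaryVec x ∧ BinaryVec y ∧ BinaryVec z ∧
  A.mulVec x ≤ b ∧ A.mulVec y ≤ b ∧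
  (∀ i, x i + y i - z i ≤ 1) ∧ (∀ i, -x i - y i - z i ≤ -1)

/-- The BPD objective `cᵀ(x+y) - ε eᵀ z`. -/
def objBPD {n : ℕ} (c : Fin n → ℝ) (ε : ℝ) (x y z : Fin n → ℝ) : ℝ :=
  (∑ i, c i * (x i + y i)) - ε * ∑ i, z i

/-- The set of squared distances `‖x* - y*‖²` between pairs of optimal solutions of BP;
its greatest element is the optimal diameter `diam(BP)`. -/
def diamSet {n m : ℕ} (A : Matrix (Fin m) (Fin n) ℝ) (b : Fin m → ℝ)
    (c : Fin n → ℝ) : Set ℝ :=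
  {r | ∃ x y, OptBP A b c x ∧ OptBP A b c y ∧ r = ∑ i, (x i - y i) ^ 2}

/-- canonical `z` for a pair: indicator of agreement. -/
noncomputable def zc {n : ℕ} (u v : Fin n → ℝ) : Fin n → ℝ :=
  fun i => if u i = v i then 1 else 0

lemma zc_feas {n m : ℕ} {A : Matrix (Fin m) (Fin n) ℝ} {b : Fin m → ℝ}
    {u v : Fin n → ℝ} (hu : FeasBP A b u) (hv : FeasBP A b v) :
    FeasBPD A b u v (zc u v) := by
  refine ⟨hu.1, hv.1, ?_, hu.2, hv.2, ?_, ?_⟩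
  · intro i; unfold zc; split <;> simp
  · intro i
    unfold zc
    rcases hu.1 i with h1 | h1 <;> rcases hv.1 i with h2 | h2 <;>
      rw [h1, h2] <;> norm_num
  · intro i
    unfold zc
    rcases hu.1 i with h1 | h1 <;> rcases hv.1 i with h2 | h2 <;>
      rw [h1, h2] <;> norm_num

lemma zc_sum {n : ℕ} {u v : Fin n → ℝ} (hu : BinaryVec u) (hv : BinaryVec v) :
    ∑ i, zc u v i = (n : ℝ) - ∑ i, (u i - v i) ^ 2 := by
  have h : ∀ i, zc u v i + (u i - v i) ^ 2 = 1 := by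
    intro i; unfold zc
    rcases hu i with h1 | h1 <;> rcases hv i with h2 | h2 <;> rw [h1, h2] <;> norm_num
  have h2 : ∑ i : Fin n, (zc u v i + (u i - v i) ^ 2) = (n : ℝ) := by
    simp [h]
  rw [Finset.sum_add_distrib] at h2
  linarith

lemma obj_eq {n : ℕ} (c : Fin n → ℝ) (ε : ℝ) (u v w : Fin n → ℝ) :
    objBPD c ε u v w = (∑ i, c i * u i) + (∑ i, c i * v i) - ε * ∑ i, w i := by
  simp [objBPD, mul_add, Finset.sum_add_distrib]

theorem stmt3 {n m : ℕ} (A : Matrix (Fin m) (Fin n) ℝ) (b : Fin m → ℝ)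
    (c : Fin n → ℝ) (hne : ∃ x, FeasBP A b x) :
    ∃ ε > (0 : ℝ), ∀ x y z, FeasBPD A b x y z →
      (∀ x' y' z', FeasBPD A b x' y' z' →
        objBPD c ε x' y' z' ≤ objBPD c ε x y z) →
      IsGreatest (diamSet A b c) ((n : ℝ) - ∑ i, z i) := by
  classical
  set f : (Fin n → ℝ) → ℝ := fun x => ∑ i, c i * x i with hf
  -- finiteness of the feasible set
  have hBfin : {x : Fin n → ℝ | BinaryVec x}.Finite := by
    have hsub : {x : Fin n → ℝ | BinaryVec x} ⊆
        Set.pi Set.univ (fun _ : Fin n => ({0, 1} : Set ℝ)) := by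
      intro x hx i _
      rcases hx i with h | h <;> simp [h]
    exact Set.Finite.subset (Set.Finite.pi fun _ =>
      (Set.finite_singleton 1).insert 0) hsub
  have hFfin : {x | FeasBP A b x}.Finite := hBfin.subset fun x hx => hx.1
  obtain ⟨x0, hx0⟩ := hne
  set Fs : Finset (Fin n → ℝ) := hFfin.toFinset with hFs
  have hmemFs : ∀ x, x ∈ Fs ↔ FeasBP A b x := fun x => hFfin.mem_toFinset
  set vals : Finset ℝ := Fs.image f with hvals
  have hvne : vals.Nonempty := ⟨f x0, Finset.mem_image_of_mem f ((hmemFs x0).mpr hx0)⟩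
  set M : ℝ := vals.max' hvne with hM
  have hMle : ∀ x', FeasBP A b x' → f x' ≤ M := fun x' h =>
    Finset.le_max' _ _ (Finset.mem_image_of_mem f ((hmemFs x').mpr h))
  have hMmem : ∃ w, FeasBP A b w ∧ f w = M := by
    obtain ⟨w, hw, hweq⟩ := Finset.mem_image.mp (vals.max'_mem hvne)
    exact ⟨w, (hmemFs w).mp hw, hweq⟩
  -- the gap δ
  set losses : Finset ℝ := (vals.filter (· < M)).image (fun v => M - v) with hlosses
  set D : Finset ℝ := insert (1 : ℝ) losses with hD
  have hDne : D.Nonempty := ⟨1, Finset.mem_insert_self _ _⟩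
  set δ : ℝ := D.min' hDne with hδ
  have hDpos : ∀ d ∈ D, 0 < d := by
    intro d hd
    rcases Finset.mem_insert.mp hd with h | h
    · rw [h]; norm_num
    · obtain ⟨v, hv, hveq⟩ := Finset.mem_image.mp h
      have : v < M := (Finset.mem_filter.mp hv).2
      linarith [hveq ▸ sub_pos.mpr this]
  have hδpos : 0 < δ := hDpos δ (D.min'_mem hDne)
  have hδgap : ∀ x', FeasBP A b x' → f x' < M → f x' + δ ≤ M := by
    intro x' hx' hlt
    have hmem : M - f x' ∈ D := by
      apply Finset.mem_insert_of_mem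
      exact Finset.mem_image_of_mem _ (Finset.mem_filter.mpr
        ⟨Finset.mem_image_of_mem f ((hmemFs x').mpr hx'), hlt⟩)
    have := D.min'_le _ hmem
    linarith
  -- choose ε
  set ε : ℝ := δ / (2 * (n + 1)) with hε
  have hεpos : 0 < ε := by positivity
  have hεn : ε * n < δ := by
    have h1 : ε * (2 * (n + 1)) = δ := by
      rw [hε]; exact div_mul_cancel₀ δ (by positivity)
    have h2 : (n : ℝ) < 2 * (n + 1) := by push_cast; linarith [Nat.cast_nonneg (α := ℝ) n]
    calc ε * n < ε * (2 * (n + 1)) := by exact mul_lt_mul_of_pos_left h2 hεpos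
    _ = δ := h1
  refine ⟨ε, hεpos, ?_⟩
  intro x y z hfeas hopt
  obtain ⟨hxb, hyb, hzb, hxA, hyA, h1c, h2c⟩ := hfeas
  -- pointwise lower bound on z
  have hzge : ∀ i, 1 - (x i - y i) ^ 2 ≤ z i := by
    intro i
    have H1 := h1c i
    have H2 := h2c i
    rcases hxb i with hx | hx <;> rcases hyb i with hy | hy <;>
      rcases hzb i with hz | hz <;> rw [hx, hy, hz] at H1 H2 ⊢ <;> norm_num at *
  have hzsum_ge : (n : ℝ) - ∑ i, (x i - y i) ^ 2 ≤ ∑ i, z i := by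
    have := Finset.sum_le_sum (s := Finset.univ)
      (fun i _ => hzge i)
    rw [Finset.sum_sub_distrib] at this
    simpa using this
  have hzsum_nonneg : 0 ≤ ∑ i, z i :=
    Finset.sum_nonneg fun i _ => by rcases hzb i with h | h <;> rw [h] <;> norm_num
  have hdsum_nonneg : ∀ u v : Fin n → ℝ, (0:ℝ) ≤ ∑ i, (u i - v i) ^ 2 :=
    fun u v => Finset.sum_nonneg fun i _ => sq_nonneg _
  have hxF : FeasBP A b x := ⟨hxb, hxA⟩
  have hyF : FeasBP A b y := ⟨hyb, hyA⟩
  -- x achieves the optimum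
  have hx_opt : f x = M := by
    by_contra hcon
    have hlt : f x < M := lt_of_le_of_ne (hMle x hxF) hcon
    obtain ⟨w, hwF, hwM⟩ := hMmem
    have hkey := hopt w y (zc w y) (zc_feas hwF hyF)
    rw [obj_eq, obj_eq, zc_sum hwF.1 hyb] at hkey
    have hεd : ε * ((n:ℝ) - ∑ i, (w i - y i) ^ 2) ≤ ε * n := by
      have := hdsum_nonneg w y
      nlinarith
    have hεz : 0 ≤ ε * ∑ i, z i := mul_nonneg hεpos.le hzsum_nonneg
    have hgap := hδgap x hxF hlt
    simp only [hf] at hgap hwM hkey ⊢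
    nlinarith
  have hy_opt : f y = M := by
    by_contra hcon
    have hlt : f y < M := lt_of_le_of_ne (hMle y hyF) hcon
    obtain ⟨w, hwF, hwM⟩ := hMmem
    have hkey := hopt x w (zc x w) (zc_feas hxF hwF)
    rw [obj_eq, obj_eq, zc_sum hxb hwF.1] at hkey
    have hεd : ε * ((n:ℝ) - ∑ i, (x i - w i) ^ 2) ≤ ε * n := by
      have := hdsum_nonneg x w
      nlinarith
    have hεz : 0 ≤ ε * ∑ i, z i := mul_nonneg hεpos.le hzsum_nonneg
    have hgap := hδgap y hyF hlt
    simp only [hf] at hgap hwM hkey ⊢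
    nlinarith
  have hOptx : OptBP A b c x := ⟨hxF, fun x' h => (hMle x' h).trans hx_opt.ge⟩
  have hOpty : OptBP A b c y := ⟨hyF, fun x' h => (hMle x' h).trans hy_opt.ge⟩
  -- upper bound: every optimal pair has distance ≤ n - ∑ z
  have hub : ∀ u v, OptBP A b c u → OptBP A b c v →
      ∑ i, (u i - v i) ^ 2 ≤ (n : ℝ) - ∑ i, z i := by
    intro u v hu hv
    have huM : f u = M := le_antisymm (hMle u hu.1) (hx_opt ▸ hu.2 x hxF)
    have hvM : f v = M := le_antisymm (hMle v hv.1) (hx_opt ▸ hv.2 x hxF)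
    have hkey := hopt u v (zc u v) (zc_feas hu.1 hv.1)
    rw [obj_eq, obj_eq, zc_sum hu.1.1 hv.1.1] at hkey
    simp only [hf] at huM hvM hx_opt hy_opt
    rw [huM, hvM, hx_opt, hy_opt] at hkey
    -- M + M - ε (n - d) ≤ M + M - ε ∑ z  →  ∑ z ≤ n - d
    have h3 : ε * ∑ i, z i ≤ ε * ((n:ℝ) - ∑ i, (u i - v i) ^ 2) := by linarith
    have h4 := le_of_mul_le_mul_left h3 hεpos
    linarith
  have heq : (n : ℝ) - ∑ i, z i = ∑ i, (x i - y i) ^ 2 := by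
    have := hub x y hOptx hOpty
    linarith
  constructor
  · exact ⟨x, y, hOptx, hOpty, heq⟩
  · rintro r ⟨u, v, hu, hv, rfl⟩
    exact hub u v hu hv
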